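/- Let X₁ and Z be independent real random variables, X₁ exponentially distributed with mean λ₁ > 0 and Z nonnegative. Let λ₂, A, B, ρ, η, k₂, u₁, u₂ > 0 with k₂·u₂·u₁ < 1, set C = B/(A·k₂·u₁) − B·u₂/A, D_Z = (1/C)·( η·Z/(A·k₂) + η·Z·u₂/A + u₂/(A·ρ) + 1/(A·ρ·k₂) ), and Q₂ = η·u₂/(A·λ₂) + (B·u₂/(A·λ₂) + 1/λ₁)·(η/(A·C·k₂) + η·u₂/(A·C)). Then 𝔼[ 1{X₁ > D_Z} · exp( −(B·ρ·X₁·u₂ + η·ρ·Z·u₂ + u₂)/(A·λ₂·ρ) ) ] = ( A·λ₂/(B·u₂·λ₁ + A·λ₂) ) · exp( −u₂/(A·λ₂·ρ) ) · exp( −(B·u₂/(A·λ₂) + 1/λ₁)·( u₂/(A·C·ρ) + 1/(A·C·k₂·ρ) ) ) · 𝔼[ exp(−Q₂·Z) ]. -/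

import Mathlib

open MeasureTheory ProbabilityTheory Real

/-- A real random variable `X` is exponentially distributed with mean `lam > 0` if its law has
density `(1/lam) * exp (-x/lam)` on `[0, ∞)` and `0` on `(-∞, 0)`. -/
def HasExpLaw {Ω : Type*} [MeasurableSpace Ω] (P : Measure Ω) (X : Ω → ℝ) (lam : ℝ) : Prop :=
  Measurable X ∧
    P.map X = MeasureTheory.volume.withDensity
      (fun x => ENNReal.ofReal (if 0 ≤ x then (1 / lam) * Real.exp (-x / lam) else 0))

open Set Filter in
lemma exp_tail_aux9 (b t : ℝ) (hb : 0 < b) :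
    (∫ x in Ioi t, Real.exp (-b * x)) = Real.exp (-b * t) / b := by
  have hderiv : ∀ x ∈ Ici t, HasDerivAt (fun x => -Real.exp (-b * x) / b)
      (Real.exp (-b * x)) x := by
    intro x _
    have h1 : HasDerivAt (fun x : ℝ => -b * x) (-b) x := by
      simpa using (hasDerivAt_id x).const_mul (-b)
    have h2 := (h1.exp).neg.div_const b
    convert h2 using 1
    · rfl
    · rfl
    · rfl
    · rw [eq_div_iff hb.ne']; ring
  have hlim : Tendsto (fun x => -Real.exp (-b * x) / b) atTop (nhds 0) := by
    have h0pre : Tendsto (fun x : ℝ => b * x) atTop atTop :=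
      (tendsto_const_mul_atTop_of_pos hb).mpr tendsto_id
    have h0 : Tendsto (fun x : ℝ => -b * x) atTop atBot := by
      have := tendsto_neg_atTop_atBot.comp h0pre
      simpa [Function.comp_def, neg_mul] using this
    have := (Real.tendsto_exp_atBot.comp h0).neg.div_const b
    simpa [Function.comp_def] using this
  have key := integral_Ioi_of_hasDerivAt_of_tendsto' hderiv
    (exp_neg_integrableOn_Ioi t hb) hlim
  rw [key]; ring

set_option maxHeartbeats 1000000 in
theorem stmt_9 {Ω : Type*} [MeasurableSpace Ω] (P : Measure Ω) [IsProbabilityMeasure P]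
    (lam₁ lam₂ A B ρ η k₂ u₁ u₂ : ℝ)
    (hlam₁ : 0 < lam₁) (hlam₂ : 0 < lam₂) (hA : 0 < A) (hB : 0 < B) (hρ : 0 < ρ)
    (hη : 0 < η) (hk₂ : 0 < k₂) (hu₁ : 0 < u₁) (hu₂ : 0 < u₂)
    (hcond : k₂ * u₂ * u₁ < 1)
    (X₁ Z : Ω → ℝ) (hX₁ : HasExpLaw P X₁ lam₁)
    (hZmeas : Measurable Z) (hZnonneg : ∀ ω, 0 ≤ Z ω)
    (hindep : IndepFun X₁ Z P)
    (C : ℝ) (hC : C = B / (A * k₂ * u₁) - B * u₂ / A)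
    (DZ : Ω → ℝ)
    (hDZ : ∀ ω, DZ ω = (1 / C) * (η * Z ω / (A * k₂) + η * Z ω * u₂ / A +
        u₂ / (A * ρ) + 1 / (A * ρ * k₂)))
    (Q₂ : ℝ)
    (hQ₂ : Q₂ = η * u₂ / (A * lam₂) +
        (B * u₂ / (A * lam₂) + 1 / lam₁) * (η / (A * C * k₂) + η * u₂ / (A * C))) :
    (∫ ω, (if DZ ω < X₁ ω then
        Real.exp (-(B * ρ * X₁ ω * u₂ + η * ρ * Z ω * u₂ + u₂) / (A * lam₂ * ρ))
      else 0) ∂P) =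
      (A * lam₂ / (B * u₂ * lam₁ + A * lam₂)) * Real.exp (-u₂ / (A * lam₂ * ρ)) *
        Real.exp (-(B * u₂ / (A * lam₂) + 1 / lam₁) *
          (u₂ / (A * C * ρ) + 1 / (A * C * k₂ * ρ))) *
        ∫ ω, Real.exp (-Q₂ * Z ω) ∂P := by
  obtain ⟨hX₁m, hX₁law⟩ := hX₁
  have hAne : A ≠ 0 := hA.ne'
  have hρne : ρ ≠ 0 := hρ.ne'
  have hk₂ne : k₂ ≠ 0 := hk₂.ne'
  have hl₁ne : lam₁ ≠ 0 := hlam₁.ne'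
  have hl₂ne : lam₂ ≠ 0 := hlam₂.ne'
  have hCpos : 0 < C := by
    have h1 : C = B * (1 - k₂ * u₂ * u₁) / (A * k₂ * u₁) := by
      rw [hC]; field_simp
    rw [h1]
    exact div_pos (mul_pos hB (by linarith)) (by positivity)
  have hCne : C ≠ 0 := hCpos.ne'
  obtain ⟨a, ha⟩ : ∃ a : ℝ, a = B * u₂ / (A * lam₂) := ⟨_, rfl⟩
  obtain ⟨b, hb⟩ : ∃ b : ℝ, b = η * u₂ / (A * lam₂) := ⟨_, rfl⟩
  obtain ⟨c, hc⟩ : ∃ c : ℝ, c = u₂ / (A * lam₂ * ρ) := ⟨_, rfl⟩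
  obtain ⟨al, hal⟩ : ∃ al : ℝ, al = (1 / C) * (η / (A * k₂) + η * u₂ / A) := ⟨_, rfl⟩
  obtain ⟨be, hbe⟩ : ∃ be : ℝ, be = (1 / C) * (u₂ / (A * ρ) + 1 / (A * ρ * k₂)) := ⟨_, rfl⟩
  obtain ⟨r, hr⟩ : ∃ r : ℝ, r = a + 1 / lam₁ := ⟨_, rfl⟩
  have hapos : 0 < a := by rw [ha]; positivity
  have hbpos : 0 < b := by rw [hb]; positivity
  have hcpos : 0 < c := by rw [hc]; positivity
  have halpos : 0 < al := by rw [hal]; positivity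
  have hbepos : 0 < be := by rw [hbe]; positivity
  have hrpos : 0 < r := by rw [hr]; positivity
  have hQ : Q₂ = b + r * al := by
    rw [hQ₂, hr, ha, hb, hal]; field_simp
  -- the function on the product space
  set g : ℝ × ℝ → ℝ := fun p =>
    (if al * p.2 + be < p.1 then Real.exp (-a * p.1) else 0) *
      (Real.exp (-b * p.2) * Real.exp (-c)) with hg
  have hgmeas : Measurable g := by
    apply Measurable.mul
    · exact Measurable.ite
        (measurableSet_lt ((measurable_snd.const_mul al).add_const be) measurable_fst)
        ((measurable_fst.const_mul (-a)).exp) measurable_const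
    · exact ((measurable_snd.const_mul (-b)).exp).mul_const _
  -- rewrite the integrand
  have hstep : ∀ ω, (if DZ ω < X₁ ω then
      Real.exp (-(B * ρ * X₁ ω * u₂ + η * ρ * Z ω * u₂ + u₂) / (A * lam₂ * ρ))
      else 0) = g (X₁ ω, Z ω) := by
    intro ω
    have hD : DZ ω = al * Z ω + be := by rw [hDZ ω, hal, hbe]; ring
    rw [hg]
    simp only [hD]
    by_cases h : al * Z ω + be < X₁ ω
    · rw [if_pos h, if_pos h, ← Real.exp_add, ← Real.exp_add]
      congr 1
      rw [ha, hb, hc]; field_simp; ring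
    · simp [h]
  -- product measure
  have hpairmeas : Measurable (fun ω => (X₁ ω, Z ω)) := hX₁m.prodMk hZmeas
  have hmap : P.map (fun ω => (X₁ ω, Z ω)) = (P.map X₁).prod (P.map Z) :=
    (indepFun_iff_map_prod_eq_prod_map_map hX₁m.aemeasurable hZmeas.aemeasurable).mp hindep
  have hPX : IsProbabilityMeasure (P.map X₁) := Measure.isProbabilityMeasure_map hX₁m.aemeasurable
  have hPZ : IsProbabilityMeasure (P.map Z) := Measure.isProbabilityMeasure_map hZmeas.aemeasurable
  have hZae : ∀ᵐ z ∂(P.map Z), 0 ≤ z := by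
    rw [ae_map_iff hZmeas.aemeasurable (measurableSet_Ici : MeasurableSet (Set.Ici (0:ℝ)))]
    exact Filter.Eventually.of_forall hZnonneg
  have hprod_ae : ∀ᵐ p ∂((P.map X₁).prod (P.map Z)), 0 ≤ p.2 := by
    rw [← hmap, ae_map_iff hpairmeas.aemeasurable
      (measurableSet_le measurable_const measurable_snd)]
    exact Filter.Eventually.of_forall (fun ω => hZnonneg ω)
  have hbound : ∀ᵐ p ∂((P.map X₁).prod (P.map Z)), ‖g p‖ ≤ 1 := by
    refine hprod_ae.mono (fun p hp => ?_)
    rw [hg]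
    by_cases hlt : al * p.2 + be < p.1
    · simp only [if_pos hlt]
      have hp1 : 0 < p.1 := by
        have := mul_nonneg halpos.le hp; linarith
      have h1 : Real.exp (-a * p.1) ≤ 1 :=
        Real.exp_le_one_iff.mpr (by have := mul_nonneg hapos.le hp1.le; linarith)
      have h2 : Real.exp (-b * p.2) ≤ 1 :=
        Real.exp_le_one_iff.mpr (by have := mul_nonneg hbpos.le hp; linarith)
      have h3 : Real.exp (-c) ≤ 1 := Real.exp_le_one_iff.mpr (by linarith)
      rw [Real.norm_eq_abs, abs_of_nonneg (by positivity)]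
      exact mul_le_one₀ h1 (by positivity) (mul_le_one₀ h2 (Real.exp_pos _).le h3)
    · simp [hlt]
  have hInt : Integrable g ((P.map X₁).prod (P.map Z)) :=
    Integrable.mono' (integrable_const 1) hgmeas.aestronglyMeasurable hbound
  -- inner integral
  have hinner : ∀ z : ℝ, 0 ≤ z →
      (∫ x, g (x, z) ∂(P.map X₁)) =
        (1 / lam₁ * (Real.exp (-b * z) * Real.exp (-c))) *
          (Real.exp (-r * (al * z + be)) / r) := by
    intro z hz
    rw [hX₁law]
    rw [show (fun x => ENNReal.ofReal (if 0 ≤ x then (1 / lam₁) * Real.exp (-x / lam₁) else 0))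
        = (fun x => ((Real.toNNReal (if 0 ≤ x then (1 / lam₁) * Real.exp (-x / lam₁) else 0)
          : NNReal) : ENNReal)) from rfl]
    have hpdfmeas : Measurable (fun x : ℝ =>
        Real.toNNReal (if 0 ≤ x then (1 / lam₁) * Real.exp (-x / lam₁) else 0)) := by
      apply Measurable.real_toNNReal
      exact Measurable.ite measurableSet_Ici
        (((measurable_id.neg.div_const lam₁).exp).const_mul (1 / lam₁)) measurable_const
    rw [integral_withDensity_eq_integral_smul hpdfmeas]
    have hfun : (fun x => (Real.toNNReal (if 0 ≤ x then (1 / lam₁) * Real.exp (-x / lam₁) else 0))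
          • g (x, z)) =
        Set.indicator (Set.Ioi (al * z + be))
          (fun x => (1 / lam₁ * (Real.exp (-b * z) * Real.exp (-c))) * Real.exp (-r * x)) := by
      funext x
      by_cases hlt : al * z + be < x
      · have hx0 : (0:ℝ) ≤ x := by nlinarith [mul_nonneg halpos.le hz]
        rw [Set.indicator_of_mem (show x ∈ Set.Ioi (al * z + be) from hlt), hg]
        simp only [if_pos hx0, if_pos hlt]
        rw [NNReal.smul_def, Real.coe_toNNReal _ (by positivity)]
        rw [hr]
        rw [show -(a + 1/lam₁) * x = (-x/lam₁) + (-a * x) by ring, Real.exp_add,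
          smul_eq_mul]
        ring
      · rw [Set.indicator_of_notMem (show x ∉ Set.Ioi (al * z + be) from hlt), hg]
        simp only [if_neg hlt]
        simp
    rw [hfun, integral_indicator measurableSet_Ioi, integral_const_mul,
      exp_tail_aux9 r _ hrpos]
  -- the constant
  obtain ⟨K, hK⟩ : ∃ K : ℝ, K = (1 / (lam₁ * r)) * Real.exp (-r * be) * Real.exp (-c) :=
    ⟨_, rfl⟩
  calc (∫ ω, (if DZ ω < X₁ ω then
        Real.exp (-(B * ρ * X₁ ω * u₂ + η * ρ * Z ω * u₂ + u₂) / (A * lam₂ * ρ))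
      else 0) ∂P)
      = ∫ ω, g (X₁ ω, Z ω) ∂P := by
        exact integral_congr_ae (Filter.Eventually.of_forall hstep)
    _ = ∫ p, g p ∂((P.map X₁).prod (P.map Z)) := by
        rw [← hmap, integral_map hpairmeas.aemeasurable hgmeas.aestronglyMeasurable]
    _ = ∫ z, (∫ x, g (x, z) ∂(P.map X₁)) ∂(P.map Z) := integral_prod_symm g hInt
    _ = ∫ z, K * Real.exp (-Q₂ * z) ∂(P.map Z) := by
        refine integral_congr_ae (hZae.mono (fun z hz => ?_))
        dsimp only
        rw [hinner z hz, hK, hQ]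
        rw [show -r * (al * z + be) = (-r * be) + (-(r * al) * z) by ring, Real.exp_add]
        rw [show -(b + r * al) * z = (-b * z) + (-(r * al) * z) by ring, Real.exp_add]
        ring
    _ = K * ∫ z, Real.exp (-Q₂ * z) ∂(P.map Z) := integral_const_mul K _
    _ = K * ∫ ω, Real.exp (-Q₂ * Z ω) ∂P := by
        rw [integral_map hZmeas.aemeasurable
          ((show Measurable fun y : ℝ => Real.exp (-Q₂ * y) from (measurable_id.const_mul (-Q₂)).exp).aestronglyMeasurable)]
    _ = (A * lam₂ / (B * u₂ * lam₁ + A * lam₂)) * Real.exp (-u₂ / (A * lam₂ * ρ)) *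
        Real.exp (-(B * u₂ / (A * lam₂) + 1 / lam₁) *
          (u₂ / (A * C * ρ) + 1 / (A * C * k₂ * ρ))) *
        ∫ ω, Real.exp (-Q₂ * Z ω) ∂P := by
        have h1 : 1 / (lam₁ * r) = A * lam₂ / (B * u₂ * lam₁ + A * lam₂) := by
          rw [hr, ha]
          have hden : 0 < B * u₂ * lam₁ + A * lam₂ := by positivity
          field_simp
        have h2 : Real.exp (-c) = Real.exp (-u₂ / (A * lam₂ * ρ)) := by
          congr 1; rw [hc]; ring
        have h3 : Real.exp (-r * be) = Real.exp (-(B * u₂ / (A * lam₂) + 1 / lam₁) *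
            (u₂ / (A * C * ρ) + 1 / (A * C * k₂ * ρ))) := by
          congr 1; rw [hr, hbe, ha]; field_simp
        rw [hK, h1, h2, h3]
        ring
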